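/- Let ℓ ≥ 7 be an integer. For every two distinct non-adjacent vertices u and v of the graph W(ℓ), there is a cycle in W(ℓ) of length either 2ℓ−4 or 2ℓ−3 that contains both u and v. -/

import Mathlib

open SimpleGraph

/-- The subdivided wheel `W(ℓ)`: a cycle `v_0 ⋯ v_{3ℓ-12}` of length `3ℓ-11` (the vertices
`Sum.inl i`), together with a center `c = Sum.inr 0` and three midpoints
`m_1, m_2, m_3 = Sum.inr 1, 2, 3`, where `c` is adjacent to each `m_k`, and `m_1, m_2, m_3`
are adjacent to `v_0`, `v_{ℓ-4}`, `v_{2ℓ-8}` respectively. -/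
def WGraph (ℓ : ℕ) : SimpleGraph (Fin (3 * ℓ - 11) ⊕ Fin 4) :=
  SimpleGraph.fromRel (fun u v =>
    (∃ i j : Fin (3 * ℓ - 11), u = .inl i ∧ v = .inl j ∧
      ((i : ℕ) + 1) % (3 * ℓ - 11) = (j : ℕ)) ∨
    (∃ k : Fin 4, (k : ℕ) ≠ 0 ∧ u = .inr 0 ∧ v = .inr k) ∨
    (∃ i : Fin (3 * ℓ - 11), (i : ℕ) = 0 ∧ u = .inr 1 ∧ v = .inl i) ∨
    (∃ i : Fin (3 * ℓ - 11), (i : ℕ) = ℓ - 4 ∧ u = .inr 2 ∧ v = .inl i) ∨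
    (∃ i : Fin (3 * ℓ - 11), (i : ℕ) = 2 * ℓ - 8 ∧ u = .inr 3 ∧ v = .inl i))

namespace WAux

variable (ℓ : ℕ) (h7 : 7 ≤ ℓ)

/-- The rim vertex with index `i` (mod `3ℓ-11`). -/
def vtx (i : ℕ) : Fin (3 * ℓ - 11) := ⟨i % (3 * ℓ - 11), Nat.mod_lt _ (by omega)⟩

lemma vtx_val (i : ℕ) : (vtx ℓ h7 i : ℕ) = i % (3 * ℓ - 11) := rfl

lemma rimAdj (i : ℕ) :
    (WGraph ℓ).Adj (.inl (vtx ℓ h7 i)) (.inl (vtx ℓ h7 (i + 1))) := by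
  rw [WGraph, fromRel_adj]
  refine ⟨?_, Or.inl (Or.inl ⟨vtx ℓ h7 i, vtx ℓ h7 (i + 1), rfl, rfl, ?_⟩)⟩
  · intro hcon
    have h1 : (vtx ℓ h7 i : ℕ) = (vtx ℓ h7 (i + 1) : ℕ) :=
      congrArg Fin.val (Sum.inl.inj hcon)
    rw [vtx_val, vtx_val] at h1
    have h2 : (i + 1) % (3 * ℓ - 11) = (i % (3 * ℓ - 11) + 1) % (3 * ℓ - 11) := by
      conv_lhs => rw [Nat.add_mod]
      rw [Nat.mod_eq_of_lt (show 1 < 3 * ℓ - 11 by omega)]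
    rcases Nat.lt_or_ge (i % (3 * ℓ - 11) + 1) (3 * ℓ - 11) with h | h
    · rw [Nat.mod_eq_of_lt h] at h2; omega
    · have h3 : i % (3 * ℓ - 11) = 3 * ℓ - 11 - 1 := by
        have := Nat.mod_lt i (show 0 < 3 * ℓ - 11 by omega); omega
      rw [h2, h3] at h1
      have h4 : (3 * ℓ - 11 - 1 + 1) = 3 * ℓ - 11 := by omega
      rw [h4, Nat.mod_self] at h1; omega
  · rw [vtx_val, vtx_val]
    conv_rhs => rw [Nat.add_mod]
    rw [Nat.mod_eq_of_lt (show 1 < 3 * ℓ - 11 by omega)]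

/-- Walk along the rim from `vtx i`, of length `d`. -/
def arcW (i : ℕ) : (d : ℕ) → (WGraph ℓ).Walk (.inl (vtx ℓ h7 i)) (.inl (vtx ℓ h7 (i + d)))
  | 0 => Walk.nil
  | d + 1 => (arcW i d).concat (rimAdj ℓ h7 (i + d))

lemma arc_length (i d : ℕ) : (arcW ℓ h7 i d).length = d := by
  induction d with
  | zero => rfl
  | succ d ih => rw [arcW, Walk.length_concat, ih]

lemma arc_support (i d : ℕ) : (arcW ℓ h7 i d).support
    = (List.range (d + 1)).map (fun k => Sum.inl (vtx ℓ h7 (i + k))) := by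
  induction d with
  | zero => rfl
  | succ d ih =>
    rw [arcW, Walk.support_concat, ih]
    conv_rhs => rw [List.range_succ]
    simp

lemma arc_edges (i d : ℕ) : (arcW ℓ h7 i d).edges
    = (List.range d).map (fun k => s(Sum.inl (vtx ℓ h7 (i + k)), Sum.inl (vtx ℓ h7 (i + k + 1)))) := by
  induction d with
  | zero => rfl
  | succ d ih =>
    rw [arcW, Walk.edges_concat, ih]
    conv_rhs => rw [List.range_succ]
    simp only [List.map_append, List.map_cons, List.map_nil, List.concat_eq_append]
    rfl

lemma vtx_inj (s k₁ k₂ : ℕ) (h1 : k₁ < 3 * ℓ - 11) (h2 : k₂ < 3 * ℓ - 11)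
    (h : vtx ℓ h7 (s + k₁) = vtx ℓ h7 (s + k₂)) : k₁ = k₂ := by
  have h' : (s + k₁) % (3 * ℓ - 11) = (s + k₂) % (3 * ℓ - 11) := congrArg Fin.val h
  have hm : k₁ % (3 * ℓ - 11) = k₂ % (3 * ℓ - 11) :=
    Nat.ModEq.add_left_cancel' s h'
  rwa [Nat.mod_eq_of_lt h1, Nat.mod_eq_of_lt h2] at hm

lemma cAdj (k : Fin 4) (hk : (k : ℕ) ≠ 0) :
    (WGraph ℓ).Adj (.inr 0) (.inr k) := by
  rw [WGraph, fromRel_adj]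
  refine ⟨?_, Or.inl (Or.inr (Or.inl ⟨k, hk, rfl, rfl⟩))⟩
  intro hcon
  have := Sum.inr.inj hcon
  exact hk (by rw [← this]; rfl)

lemma buildCycle (s d : ℕ) (hd0 : 0 < d) (hdn : d < 3 * ℓ - 11) (mi mj : Fin 4)
    (hmi : (WGraph ℓ).Adj (.inr mi) (.inl (vtx ℓ h7 s)))
    (hmj : (WGraph ℓ).Adj (.inr mj) (.inl (vtx ℓ h7 (s + d))))
    (hij : (mi : ℕ) ≠ (mj : ℕ)) (hi0 : (mi : ℕ) ≠ 0) (hj0 : (mj : ℕ) ≠ 0) :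
    ∃ c : (WGraph ℓ).Walk (.inr 0) (.inr 0), c.IsCycle ∧ c.length = d + 4 ∧
      c.support = .inr 0 :: .inr mi ::
        (((List.range (d + 1)).map (fun k => Sum.inl (vtx ℓ h7 (s + k)))) ++ [.inr mj, .inr 0]) := by
  have hi0' : mi ≠ (0 : Fin 4) := fun h => hi0 (by rw [h]; rfl)
  have hj0' : mj ≠ (0 : Fin 4) := fun h => hj0 (by rw [h]; rfl)
  have hij' : mi ≠ mj := fun h => hij (by rw [h])
  set q : (WGraph ℓ).Walk (.inl (vtx ℓ h7 (s + d))) (.inr 0) :=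
    Walk.cons hmj.symm (Walk.cons (cAdj ℓ mj hj0).symm Walk.nil) with hq
  set p : (WGraph ℓ).Walk (.inr mi) (.inr 0) :=
    Walk.cons hmi ((arcW ℓ h7 s d).append q) with hp
  refine ⟨Walk.cons (cAdj ℓ mi hi0) p, ?_, ?_, ?_⟩
  · rw [Walk.cons_isCycle_iff]
    constructor
    · rw [Walk.isPath_def, hp, Walk.support_cons, Walk.support_append, arc_support]
      have hqs : q.support.tail = [.inr mj, .inr 0] := rfl
      rw [hqs, List.nodup_cons]
      constructor
      · simp only [List.mem_append, List.mem_map, List.mem_range, List.mem_cons,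
          List.mem_singleton, List.not_mem_nil]
        rintro ((⟨k, hk, hkeq⟩) | (h | h | h))
        · exact absurd hkeq (by simp)
        · exact hij' (Sum.inr.inj h)
        · exact hi0' (Sum.inr.inj h)
        · simp at h
      · rw [List.nodup_append]
        refine ⟨?_, ?_, ?_⟩
        · refine (List.nodup_range).map_on ?_
          intro k₁ hk₁ k₂ hk₂ heq
          rw [List.mem_range] at hk₁ hk₂
          exact vtx_inj ℓ h7 s k₁ k₂ (by omega) (by omega) (Sum.inl.inj heq)
        · simp [hj0']
        · intro x hx y hy hxy; subst hxy
          simp only [List.mem_map, List.mem_range] at hx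
          obtain ⟨k, _, rfl⟩ := hx
          simp only [List.mem_cons, List.mem_singleton, List.not_mem_nil] at hy
          rcases hy with h | h | h
          · simp at h
          · simp at h
          · exact h
    · rw [hp, Walk.edges_cons, Walk.edges_append, arc_edges]
      have hqe : q.edges = [s(Sum.inl (vtx ℓ h7 (s + d)), Sum.inr mj), s(Sum.inr mj, Sum.inr 0)] := rfl
      rw [hqe]
      intro hmem
      simp only [List.mem_cons, List.mem_append, List.mem_map, List.mem_range,
        List.not_mem_nil, or_false] at hmem
      rcases hmem with h | ⟨k, hk, h⟩ | h | h <;>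
        (rw [Sym2.eq_iff] at h; rcases h with ⟨h1, h2⟩ | ⟨h1, h2⟩ <;> simp_all)
  · rw [Walk.length_cons, hp, Walk.length_cons, Walk.length_append, arc_length,
      show q.length = 2 from rfl]
  · rw [Walk.support_cons, hp, Walk.support_cons, Walk.support_append, arc_support]
    rfl

lemma mAdj1 (x : ℕ) (hx : x % (3 * ℓ - 11) = 0) :
    (WGraph ℓ).Adj (.inr 1) (.inl (vtx ℓ h7 x)) := by
  rw [WGraph, fromRel_adj]
  exact ⟨by simp, Or.inl (Or.inr (Or.inr (Or.inl ⟨vtx ℓ h7 x, hx, rfl, rfl⟩)))⟩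

lemma mAdj2 (x : ℕ) (hx : x % (3 * ℓ - 11) = ℓ - 4) :
    (WGraph ℓ).Adj (.inr 2) (.inl (vtx ℓ h7 x)) := by
  rw [WGraph, fromRel_adj]
  exact ⟨by simp, Or.inl (Or.inr (Or.inr (Or.inr (Or.inl ⟨vtx ℓ h7 x, hx, rfl, rfl⟩))))⟩

lemma mAdj3 (x : ℕ) (hx : x % (3 * ℓ - 11) = 2 * ℓ - 8) :
    (WGraph ℓ).Adj (.inr 3) (.inl (vtx ℓ h7 x)) := by
  rw [WGraph, fromRel_adj]
  exact ⟨by simp, Or.inl (Or.inr (Or.inr (Or.inr (Or.inr ⟨vtx ℓ h7 x, hx, rfl, rfl⟩))))⟩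

lemma inl_mem (s d : ℕ) (mi mj : Fin 4) (i : Fin (3 * ℓ - 11)) (k : ℕ) (hk : k ≤ d)
    (hik : (s + k) % (3 * ℓ - 11) = (i : ℕ)) :
    (Sum.inl i : Fin (3 * ℓ - 11) ⊕ Fin 4) ∈ (Sum.inr 0 :: Sum.inr mi ::
      (((List.range (d + 1)).map (fun k => Sum.inl (vtx ℓ h7 (s + k)))) ++
        [Sum.inr mj, Sum.inr 0]) : List _) := by
  simp only [List.mem_cons, List.mem_append, List.mem_map, List.mem_range]
  exact Or.inr (Or.inr (Or.inl ⟨k, by omega, congrArg Sum.inl (Fin.ext hik)⟩))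

lemma inr_mem (s d : ℕ) (mi mj : Fin 4) (k : Fin 4) (h : k = 0 ∨ k = mi ∨ k = mj) :
    (Sum.inr k : Fin (3 * ℓ - 11) ⊕ Fin 4) ∈ (Sum.inr 0 :: Sum.inr mi ::
      (((List.range (d + 1)).map (fun k => Sum.inl (vtx ℓ h7 (s + k)))) ++
        [Sum.inr mj, Sum.inr 0]) : List _) := by
  simp only [List.mem_cons, List.mem_append, List.mem_map, List.mem_range,
    List.mem_singleton]
  rcases h with rfl | rfl | rfl
  · exact Or.inl rfl
  · exact Or.inr (Or.inl rfl)
  · exact Or.inr (Or.inr (Or.inr (Or.inl rfl)))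

end WAux

open WAux

/-- For `ℓ ≥ 7`, every two distinct non-adjacent vertices of `W(ℓ)` lie
on a common cycle of length `2ℓ-4` or `2ℓ-3`. -/
theorem stmt10 (ℓ : ℕ) (hℓ : 7 ≤ ℓ) (u v : Fin (3 * ℓ - 11) ⊕ Fin 4)
    (huv : u ≠ v) (hnadj : ¬ (WGraph ℓ).Adj u v) :
    ∃ (w : Fin (3 * ℓ - 11) ⊕ Fin 4) (c : (WGraph ℓ).Walk w w),
      c.IsCycle ∧ (c.length = 2 * ℓ - 4 ∨ c.length = 2 * ℓ - 3) ∧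
        u ∈ c.support ∧ v ∈ c.support := by
  have h7 := hℓ
  -- the three cycles
  obtain ⟨c13, hc13cyc, hc13len, hc13sup⟩ :=
    buildCycle ℓ h7 0 (2 * ℓ - 8) (by omega) (by omega) 1 3
      (mAdj1 ℓ h7 0 (by simp))
      (mAdj3 ℓ h7 (0 + (2 * ℓ - 8))
        (by rw [show 0 + (2 * ℓ - 8) = 2 * ℓ - 8 from by omega,
          Nat.mod_eq_of_lt (by omega)]))
      (by decide) (by decide) (by decide)
  obtain ⟨c12, hc12cyc, hc12len, hc12sup⟩ :=
    buildCycle ℓ h7 (ℓ - 4) (2 * ℓ - 7) (by omega) (by omega) 2 1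
      (mAdj2 ℓ h7 (ℓ - 4) (Nat.mod_eq_of_lt (by omega)))
      (mAdj1 ℓ h7 (ℓ - 4 + (2 * ℓ - 7))
        (by rw [show ℓ - 4 + (2 * ℓ - 7) = 3 * ℓ - 11 from by omega, Nat.mod_self]))
      (by decide) (by decide) (by decide)
  obtain ⟨c23, hc23cyc, hc23len, hc23sup⟩ :=
    buildCycle ℓ h7 (2 * ℓ - 8) (2 * ℓ - 7) (by omega) (by omega) 3 2
      (mAdj3 ℓ h7 (2 * ℓ - 8) (Nat.mod_eq_of_lt (by omega)))
      (mAdj2 ℓ h7 (2 * ℓ - 8 + (2 * ℓ - 7))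
        (by rw [show 2 * ℓ - 8 + (2 * ℓ - 7) = (3 * ℓ - 11) + (ℓ - 4) from by omega,
          Nat.add_mod_left, Nat.mod_eq_of_lt (by omega)]))
      (by decide) (by decide) (by decide)
  -- every vertex lies on at least two of the three cycles
  have key : ∀ x : Fin (3 * ℓ - 11) ⊕ Fin 4,
      (x ∈ c12.support ∧ x ∈ c13.support) ∨ (x ∈ c12.support ∧ x ∈ c23.support) ∨
        (x ∈ c23.support ∧ x ∈ c13.support) := by
    rintro (i | k)
    · have hi := i.isLt
      rcases (by omega : (i : ℕ) ≤ ℓ - 4 ∨ ((ℓ - 4 ≤ (i : ℕ)) ∧ (i : ℕ) ≤ 2 * ℓ - 8) ∨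
          2 * ℓ - 8 ≤ (i : ℕ)) with h | h | h
      · refine Or.inr (Or.inr ⟨?_, ?_⟩)
        · rw [hc23sup]
          exact inl_mem ℓ h7 _ _ _ _ i ((i : ℕ) + ℓ - 3) (by omega)
            (by rw [show 2 * ℓ - 8 + ((i : ℕ) + ℓ - 3) = (3 * ℓ - 11) + (i : ℕ) from by omega,
              Nat.add_mod_left, Nat.mod_eq_of_lt hi])
        · rw [hc13sup]
          exact inl_mem ℓ h7 _ _ _ _ i (i : ℕ) (by omega)
            (by rw [show 0 + (i : ℕ) = (i : ℕ) from by omega, Nat.mod_eq_of_lt hi])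
      · refine Or.inl ⟨?_, ?_⟩
        · rw [hc12sup]
          exact inl_mem ℓ h7 _ _ _ _ i ((i : ℕ) - (ℓ - 4)) (by omega)
            (by rw [show ℓ - 4 + ((i : ℕ) - (ℓ - 4)) = (i : ℕ) from by omega,
              Nat.mod_eq_of_lt hi])
        · rw [hc13sup]
          exact inl_mem ℓ h7 _ _ _ _ i (i : ℕ) (by omega)
            (by rw [show 0 + (i : ℕ) = (i : ℕ) from by omega, Nat.mod_eq_of_lt hi])
      · refine Or.inr (Or.inl ⟨?_, ?_⟩)
        · rw [hc12sup]
          exact inl_mem ℓ h7 _ _ _ _ i ((i : ℕ) - (ℓ - 4)) (by omega)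
            (by rw [show ℓ - 4 + ((i : ℕ) - (ℓ - 4)) = (i : ℕ) from by omega,
              Nat.mod_eq_of_lt hi])
        · rw [hc23sup]
          exact inl_mem ℓ h7 _ _ _ _ i ((i : ℕ) - (2 * ℓ - 8)) (by omega)
            (by rw [show 2 * ℓ - 8 + ((i : ℕ) - (2 * ℓ - 8)) = (i : ℕ) from by omega,
              Nat.mod_eq_of_lt hi])
    · fin_cases k
      · exact Or.inl ⟨by rw [hc12sup]; exact inr_mem ℓ h7 _ _ _ _ _ (Or.inl rfl),
          by rw [hc13sup]; exact inr_mem ℓ h7 _ _ _ _ _ (Or.inl rfl)⟩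
      · exact Or.inl ⟨by rw [hc12sup]; exact inr_mem ℓ h7 _ _ _ _ _ (Or.inr (Or.inr rfl)),
          by rw [hc13sup]; exact inr_mem ℓ h7 _ _ _ _ _ (Or.inr (Or.inl rfl))⟩
      · exact Or.inr (Or.inl ⟨by rw [hc12sup]; exact inr_mem ℓ h7 _ _ _ _ _ (Or.inr (Or.inl rfl)),
          by rw [hc23sup]; exact inr_mem ℓ h7 _ _ _ _ _ (Or.inr (Or.inr rfl))⟩)
      · exact Or.inr (Or.inr ⟨by rw [hc23sup]; exact inr_mem ℓ h7 _ _ _ _ _ (Or.inr (Or.inl rfl)),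
          by rw [hc13sup]; exact inr_mem ℓ h7 _ _ _ _ _ (Or.inr (Or.inr rfl))⟩)
  have use12 : u ∈ c12.support → v ∈ c12.support →
      ∃ (w : Fin (3 * ℓ - 11) ⊕ Fin 4) (c : (WGraph ℓ).Walk w w),
        c.IsCycle ∧ (c.length = 2 * ℓ - 4 ∨ c.length = 2 * ℓ - 3) ∧
          u ∈ c.support ∧ v ∈ c.support :=
    fun hu hv => ⟨_, c12, hc12cyc, Or.inr (by omega), hu, hv⟩
  have use13 : u ∈ c13.support → v ∈ c13.support →
      ∃ (w : Fin (3 * ℓ - 11) ⊕ Fin 4) (c : (WGraph ℓ).Walk w w),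
        c.IsCycle ∧ (c.length = 2 * ℓ - 4 ∨ c.length = 2 * ℓ - 3) ∧
          u ∈ c.support ∧ v ∈ c.support :=
    fun hu hv => ⟨_, c13, hc13cyc, Or.inl (by omega), hu, hv⟩
  have use23 : u ∈ c23.support → v ∈ c23.support →
      ∃ (w : Fin (3 * ℓ - 11) ⊕ Fin 4) (c : (WGraph ℓ).Walk w w),
        c.IsCycle ∧ (c.length = 2 * ℓ - 4 ∨ c.length = 2 * ℓ - 3) ∧
          u ∈ c.support ∧ v ∈ c.support :=
    fun hu hv => ⟨_, c23, hc23cyc, Or.inr (by omega), hu, hv⟩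
  rcases key u with ⟨hu1, hu2⟩ | ⟨hu1, hu2⟩ | ⟨hu1, hu2⟩ <;>
    rcases key v with ⟨hv1, hv2⟩ | ⟨hv1, hv2⟩ | ⟨hv1, hv2⟩ <;>
    first
      | exact use12 hu1 hv1
      | exact use13 hu2 hv2
      | exact use23 hu2 hv1
      | exact use23 hu1 hv2
      | exact use23 hu1 hv1
      | exact use13 hu2 hv1
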